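/- (Coin-tossing realization of all symbol sequences by solutions) Let f : ℝ × ℝ → ℝ be continuous and 1-periodic in the time variable, and suppose the equation x' = f(t,x) admits a solution x with x(t+2) = x(t) for all t ∈ ℝ and x(t₁+1) > x(t₁) for some t₁ ∈ ℝ. Then there exist real numbers p < q and s₁ ∈ ℝ such that for every two-sided sequence η = (η_i)_{i∈ℤ} ∈ {0,1}^ℤ there exists a solution w : ℝ → ℝ of x' = f(t,x) satisfying, for all i ∈ ℤ: w(s₁+i) = q if η_i = 0 and w(s₁+i) = p if η_i = 1. -/

import Mathlib

/-- `x` is a (classical) solution of the ODE `x' = f(t,x)` on the whole real line. -/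
def IsSolution (f : ℝ × ℝ → ℝ) (x : ℝ → ℝ) : Prop :=
  ∀ t : ℝ, HasDerivAt x (f (t, x t)) t

theorem coin_tossing_realization
    (f : ℝ × ℝ → ℝ) (hf : Continuous f)
    (hper : ∀ t x : ℝ, f (t + 1, x) = f (t, x))
    (x : ℝ → ℝ) (hx : IsSolution f x)
    (hx2 : ∀ t : ℝ, x (t + 2) = x t)
    (t₁ : ℝ) (ht₁ : x t₁ < x (t₁ + 1)) :
    ∃ p q s₁ : ℝ, p < q ∧
      ∀ η : ℤ → Fin 2, ∃ w : ℝ → ℝ, IsSolution f w ∧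
        ∀ i : ℤ, (η i = 0 → w (s₁ + i) = q) ∧ (η i = 1 → w (s₁ + i) = p) := by
  classical
  set y : ℝ → ℝ := fun t => x (t + 1) with hy
  have hysol : IsSolution f y := by
    intro t
    have h1 : HasDerivAt (fun u : ℝ => u + 1) 1 t := (hasDerivAt_id t).add_const 1
    have h2 := (hx (t + 1)).comp t h1
    simpa [hy, Function.comp_def, hper] using h2
  have hxc : Continuous x := continuous_iff_continuousAt.2 fun t => (hx t).continuousAt
  set g : ℝ → ℝ := fun u => x u - x (u + 1) with hg
  have hgc : Continuous g := hxc.sub (hxc.comp (continuous_id.add continuous_const))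
  have hg1 : g t₁ < 0 := by simp only [hg]; linarith
  have hg2 : 0 < g (t₁ + 1) := by
    have h2 : x (t₁ + 1 + 1) = x t₁ := by rw [show t₁ + 1 + 1 = t₁ + 2 by ring, hx2]
    simp only [hg]; rw [h2]; linarith
  obtain ⟨s, hs, hgs⟩ : ∃ s ∈ Set.Ioo t₁ (t₁ + 1), g s = 0 := by
    have h := intermediate_value_Ioo (le_of_lt (lt_add_one t₁)) hgc.continuousOn
    obtain ⟨s, hsmem, hgs⟩ := h ⟨hg1, hg2⟩
    exact ⟨s, hsmem, hgs⟩
  have hflip : ∀ r : ℝ, g (r + 1) = -g r := by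
    intro r
    have h2 : x (r + 1 + 1) = x r := by rw [show r + 1 + 1 = r + 2 by ring, hx2]
    simp only [hg]; rw [h2]; ring
  have key : ∀ r : ℝ, g r = 0 → g (r + 1) = 0 := fun r h => by rw [hflip, h, neg_zero]
  have key' : ∀ r : ℝ, g r = 0 → g (r - 1) = 0 := by
    intro r h
    have h2 := hflip (r - 1)
    rw [show r - 1 + 1 = r by ring] at h2
    linarith
  have hzero : ∀ k : ℤ, g (s + k) = 0 := by
    intro k
    induction k using Int.induction_on with
    | zero => simpa using hgs
    | succ k ih =>
      have h2 := key (s + k) ih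
      convert h2 using 2
      push_cast; ring
    | pred k ih =>
      push_cast at ih ⊢
      have h2 := key' (s + -(k : ℝ)) ih
      convert h2 using 2
      ring
  have hzero' : ∀ k : ℤ, x (s + k + 1) = x (s + k) := by
    intro k
    have h2 := hzero k
    simp only [hg] at h2
    linarith
  have hx2' : ∀ t : ℝ, x (t - 2) = x t := by
    intro t
    have := hx2 (t - 2)
    rw [show t - 2 + 2 = t by ring] at this
    exact this.symm
  have hx2k : ∀ (t : ℝ) (k : ℤ), x (t + 2 * k) = x t := by
    intro t k
    induction k using Int.induction_on with
    | zero => simp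
    | succ k ih =>
      push_cast
      rw [show t + 2 * ((k : ℝ) + 1) = (t + 2 * (k : ℝ)) + 2 by ring, hx2]
      push_cast at ih
      exact ih
    | pred k ih =>
      push_cast
      push_cast at ih
      rw [show t + 2 * (-(k : ℝ) - 1) = (t + 2 * (-(k : ℝ))) - 2 by ring, hx2']
      exact ih
  have hxval : ∀ i : ℤ, x (t₁ + i) = if Even i then x t₁ else x (t₁ + 1) := by
    intro i
    rcases Int.even_or_odd i with he | ho
    · rw [if_pos he]
      obtain ⟨k, hk⟩ := he
      rw [hk]; push_cast
      rw [show t₁ + ((k : ℝ) + k) = t₁ + 2 * k by ring]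
      exact hx2k t₁ k
    · rw [if_neg (Int.not_even_iff_odd.mpr ho)]
      obtain ⟨k, hk⟩ := ho
      rw [hk]; push_cast
      rw [show t₁ + (2 * (k : ℝ) + 1) = (t₁ + 1) + 2 * k by ring]
      exact hx2k (t₁ + 1) k
  refine ⟨x t₁, x (t₁ + 1), t₁, ht₁, ?_⟩
  intro η
  set c : ℤ → ℝ → ℝ := fun i => if (η i = 0 ↔ Odd i) then x else y with hc
  set w : ℝ → ℝ := fun t => c ⌈t - s⌉ t with hw
  have hcsol : ∀ i, IsSolution f (c i) := by
    intro i
    simp only [hc]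
    split
    · exact hx
    · exact hysol
  have hcval : ∀ i k : ℤ, c i (s + k) = x (s + k) := by
    intro i k
    simp only [hc]
    split
    · rfl
    · show y (s + k) = x (s + k)
      simp only [hy]
      exact hzero' k
  have hceil : ∀ (u : ℝ) (k : ℤ), (k : ℝ) - 1 < u - s → u - s ≤ k → ⌈u - s⌉ = k := by
    intro u k h1 h2
    exact Int.ceil_eq_iff.mpr ⟨h1, h2⟩
  have hwsol : IsSolution f w := by
    intro t
    by_cases hb : ((⌈t - s⌉ : ℤ) : ℝ) = t - s
    · set k := ⌈t - s⌉ with hk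
      have hts : t = s + (k : ℝ) := by linarith
      have hwt : w t = c k t := rfl
      have hwt' : c (k + 1) t = c k t := by
        rw [hts]
        rw [hcval, hcval]
      have hL : HasDerivWithinAt w (f (t, w t)) (Set.Iic t) t := by
        have hev : w =ᶠ[nhdsWithin t (Set.Iic t)] c k := by
          filter_upwards [mem_nhdsWithin_of_mem_nhds
            (Ioi_mem_nhds (show s + (k : ℝ) - 1 < t by rw [hts]; linarith)),
            self_mem_nhdsWithin] with u hu1 hu2
          have hu1' : s + (k : ℝ) - 1 < u := hu1
          have hu2' : u ≤ t := hu2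
          have hcu : ⌈u - s⌉ = k := hceil u k (by linarith) (by rw [hts] at hu2'; linarith)
          simp only [hw, hcu]
        rw [hwt]
        exact (((hcsol k) t).hasDerivWithinAt).congr_of_eventuallyEq hev hwt
      have hR : HasDerivWithinAt w (f (t, w t)) (Set.Ici t) t := by
        have hev : w =ᶠ[nhdsWithin t (Set.Ici t)] c (k + 1) := by
          filter_upwards [mem_nhdsWithin_of_mem_nhds
            (Iio_mem_nhds (show t < s + (k : ℝ) + 1 by rw [hts]; linarith)),
            self_mem_nhdsWithin] with u hu1 hu2
          have hu1' : u < s + (k : ℝ) + 1 := hu1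
          have hu2' : t ≤ u := hu2
          rcases eq_or_lt_of_le hu2' with rfl | htu
          · exact hwt.trans hwt'.symm
          · have hcu : ⌈u - s⌉ = k + 1 := by
              apply hceil
              · push_cast; rw [hts] at htu; linarith
              · push_cast; linarith
            simp only [hw, hcu]
        have hval : f (t, c (k + 1) t) = f (t, w t) := by rw [hwt', hwt]
        rw [← hval]
        exact (((hcsol (k + 1)) t).hasDerivWithinAt).congr_of_eventuallyEq hev
          (by rw [hwt, hwt'])
      have hu := hL.union hR
      rw [Set.Iic_union_Ici] at hu
      exact hasDerivWithinAt_univ.mp hu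
    · set k := ⌈t - s⌉ with hk
      have h1 : (k : ℝ) - 1 < t - s := by
        have := Int.ceil_lt_add_one (t - s)
        rw [← hk] at this
        linarith
      have h2 : t - s < (k : ℝ) := lt_of_le_of_ne (Int.le_ceil (t - s)) (Ne.symm hb)
      have hev : w =ᶠ[nhds t] c k := by
        filter_upwards [Ioo_mem_nhds (show s + (k : ℝ) - 1 < t by linarith)
          (show t < s + (k : ℝ) by linarith)] with u hu
        have hcu : ⌈u - s⌉ = k := hceil u k (by have := hu.1; linarith)
          (by have := hu.2; linarith)
        simp only [hw, hcu]
      have hwt : w t = c k t := rfl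
      rw [hwt]
      exact ((hcsol k) t).congr_of_eventuallyEq hev
  refine ⟨w, hwsol, ?_⟩
  intro i
  have hceil_i : ⌈(t₁ + (i : ℝ)) - s⌉ = i := by
    apply hceil
    · have := hs.2; linarith
    · have := hs.1; linarith
  have hwi : w (t₁ + (i : ℝ)) = c i (t₁ + (i : ℝ)) := by simp only [hw, hceil_i]
  have hyval : y (t₁ + (i : ℝ)) = if Even i then x (t₁ + 1) else x t₁ := by
    simp only [hy]
    rw [show (t₁ + (i : ℝ)) + 1 = t₁ + ((i + 1 : ℤ) : ℝ) by push_cast; ring, hxval (i + 1)]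
    by_cases he : Even i <;> simp [he, Int.even_add_one]
  constructor
  · intro h0
    rw [hwi]
    simp only [hc]
    by_cases hoi : Odd i
    · rw [if_pos (iff_of_true h0 hoi)]
      rw [hxval i, if_neg (Int.not_even_iff_odd.mpr hoi)]
    · rw [if_neg (by simp [h0, hoi])]
      rw [hyval, if_pos (Int.not_odd_iff_even.mp hoi)]
  · intro h1
    have h0 : ¬(η i = 0) := by rw [h1]; decide
    rw [hwi]
    simp only [hc]
    by_cases hoi : Odd i
    · rw [if_neg (by simp [h0, hoi])]
      rw [hyval, if_neg (Int.not_even_iff_odd.mpr hoi)]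
    · rw [if_pos (iff_of_false h0 hoi)]
      rw [hxval i, if_pos (Int.not_odd_iff_even.mp hoi)]
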